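/- Let D be a finite digraph equal to its core, with adjacency matrix Adj_D. The quotient of the commutative monoid ℕ^{V_D} by the congruence generated by the pairs (χ_v, Σ_w (v,w)Adj_D · χ_w) for each vertex v equals the quotient by the 'common refinement' congruence ~_D; i.e., the UDAF dimension monoid of D is presented as a commutative monoid by generators V_D and relations v = Σ_w Adj_D(v,w)·w. -/

import Mathlib

structure Digraph' where
  V : Type
  E : Type
  s : E → V
  t : E → V

structure DHom (D₁ D₂ : Digraph') where
  vMap : D₁.V → D₂.V
  eMap : D₁.E → D₂.E
  hs : ∀ e, D₂.s (eMap e) = vMap (D₁.s e)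
  ht : ∀ e, D₂.t (eMap e) = vMap (D₁.t e)

def BiWalk (D : Digraph') : Type :=
  { f : ℤ → D.E // ∀ i : ℤ, D.t (f i) = D.s (f (i + 1)) }

def biMap {D₁ D₂ : Digraph'} (φ : DHom D₁ D₂) (w : BiWalk D₁) : BiWalk D₂ :=
  ⟨fun i => φ.eMap (w.1 i), fun i => by rw [φ.ht, φ.hs, w.2 i]⟩

structure FwdWalk (D : Digraph') where
  ed : ℕ → D.E
  chain : ∀ i : ℕ, D.t (ed i) = D.s (ed (i + 1))

structure BwdWalk (D : Digraph') where
  ed : ℕ → D.E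
  chain : ∀ i : ℕ, D.t (ed (i + 1)) = D.s (ed i)

/-- UDAF digraph condition: for each vertex, the number of infinite forwards walks
from it and of infinite backwards walks to it are each `≠ 1`. -/
def IsUDAF (D : Digraph') : Prop :=
  (∀ v : D.V, ¬∃! p : FwdWalk D, D.s (p.ed 0) = v) ∧
  (∀ v : D.V, ¬∃! p : BwdWalk D, D.t (p.ed 0) = v)

/-- Edges lying on some bi-infinite walk. -/
def CoreE (D : Digraph') : Set D.E := {e | ∃ w : BiWalk D, ∃ i : ℤ, w.1 i = e}

/-- Vertices lying on some bi-infinite walk. -/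
def CoreV (D : Digraph') : Set D.V := {v | ∃ w : BiWalk D, ∃ i : ℤ, D.s (w.1 i) = v}

structure FinWalk (D : Digraph') where
  start : D.V
  ed : List D.E
  chain : List.Chain' (fun a b => D.t a = D.s b) ed
  hstart : ∀ e ∈ ed.head?, D.s e = start

def endVert (D : Digraph') (p : FinWalk D) : D.V :=
  p.ed.getLast?.elim p.start D.t

/-- The infinite forwards walk `q` begins with the finite walk `p`. -/
def Begins (D : Digraph') (q : FwdWalk D) (p : FinWalk D) : Prop :=
  D.s (q.ed 0) = p.start ∧ ∀ (i : ℕ) (h : i < p.ed.length), q.ed i = p.ed.get ⟨i, h⟩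

/-- `M₂` is obtained from `M₁` by replacing one copy of a core vertex `v` by the
endpoint multiset of a finite exhaustive prefix-free family of core walks from `v`. -/
def ElemRefine (D : Digraph') (M₁ M₂ : ↥(CoreV D) → ℕ) : Prop := by
  classical
  exact ∃ (v : ↥(CoreV D)) (P : Finset (FinWalk D)),
    0 < M₁ v ∧
    (∀ p ∈ P, p.start = v.1 ∧ ∀ e ∈ p.ed, e ∈ CoreE D) ∧
    (∀ q : FwdWalk D, D.s (q.ed 0) = v.1 → (∀ i, q.ed i ∈ CoreE D) →
      ∃! p, p ∈ P ∧ Begins D q p) ∧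
    ∀ w : ↥(CoreV D),
      M₂ w = (M₁ w - (if w = v then 1 else 0)) + (P.filter (fun p => endVert D p = w.1)).card

/-- Refinement: a finite composite of elementary refinements. -/
def Refine (D : Digraph') : (↥(CoreV D) → ℕ) → (↥(CoreV D) → ℕ) → Prop :=
  Relation.ReflTransGen (ElemRefine D)

open Classical in
noncomputable def chi (D : Digraph') (v : ↥(CoreV D)) : ↥(CoreV D) → ℕ :=
  fun w => if w = v then 1 else 0

/-- Row `v` of the adjacency matrix, as a multiset over the core vertices. -/
noncomputable def adjRow (D : Digraph') (v : ↥(CoreV D)) : ↥(CoreV D) → ℕ :=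
  fun w => Set.ncard {e : D.E | D.s e = v.1 ∧ D.t e = w.1}

variable {D : Digraph'}

lemma FinWalk.ext' {p q : FinWalk D} (h1 : p.start = q.start) (h2 : p.ed = q.ed) : p = q := by
  cases p; cases q; cases h1; cases h2; rfl

lemma exists_fwd (hV : CoreV D = Set.univ) (u : D.V) :
    ∃ q : FwdWalk D, D.s (q.ed 0) = u := by
  have hu : u ∈ CoreV D := hV ▸ Set.mem_univ u
  obtain ⟨w, i, hi⟩ := hu
  refine ⟨⟨fun n => w.1 (i + n), fun n => ?_⟩, by simpa using hi⟩
  have := w.2 (i + n)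
  rw [this]
  congr 2
  push_cast
  ring_nf

/-- Extend a finite walk to an infinite walk beginning with it. -/
lemma exists_begins (hV : CoreV D = Set.univ) (p : FinWalk D) :
    ∃ q : FwdWalk D, Begins D q p := by
  obtain ⟨tl, htl⟩ := exists_fwd hV (endVert D p)
  by_cases hnil : p.ed = []
  · refine ⟨tl, ?_, ?_⟩
    · rw [htl]; unfold endVert; rw [hnil]; rfl
    · intro i h; rw [hnil] at h; simp at h
  · have hend : endVert D p = D.t (p.ed.getLast hnil) := by
      unfold endVert; rw [List.getLast?_eq_getLast_of_ne_nil hnil]; rfl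
    refine ⟨⟨fun n => if h : n < p.ed.length then p.ed.get ⟨n, h⟩ else tl.ed (n - p.ed.length), ?_⟩, ?_, ?_⟩
    · intro i
      rcases lt_trichotomy (i + 1) p.ed.length with h | h | h
      · rw [dif_pos h, dif_pos (Nat.lt_of_succ_lt h)]
        exact List.isChain_iff_getElem.mp p.chain i (by omega)
      · rw [dif_pos (by omega : i < p.ed.length), dif_neg (by omega)]
        have : i + 1 - p.ed.length = 0 := by omega
        rw [this, htl, hend]
        have hi : i = p.ed.length - 1 := by omega
        subst hi
        simp only [List.getLast_eq_getElem, List.get_eq_getElem]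
      · rw [dif_neg (by omega : ¬ i < p.ed.length), dif_neg (by omega : ¬ i + 1 < p.ed.length)]
        have h2 : i + 1 - p.ed.length = (i - p.ed.length) + 1 := by omega
        rw [h2]
        exact tl.chain (i - p.ed.length)
    · have hlen : 0 < p.ed.length := List.length_pos_iff.mpr hnil
      dsimp only
      rw [dif_pos hlen]
      exact p.hstart _ (by rw [List.head?_eq_head hnil, List.get_mk_zero]; simp)
    · intro i h; dsimp only; rw [dif_pos h]


lemma begins_endVert {q : FwdWalk D} {p : FinWalk D} (h : Begins D q p) :
    D.s (q.ed p.ed.length) = endVert D p := by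
  by_cases hnil : p.ed = []
  · rw [hnil]
    unfold endVert
    rw [hnil]
    exact h.1
  · have hlen : 0 < p.ed.length := List.length_pos_iff.mpr hnil
    have hc := q.chain (p.ed.length - 1)
    rw [(by omega : p.ed.length - 1 + 1 = p.ed.length)] at hc
    rw [← hc, h.2 (p.ed.length - 1) (by omega)]
    unfold endVert
    rw [List.getLast?_eq_getLast_of_ne_nil hnil]
    simp only [Option.elim, List.getLast_eq_getElem, List.get_eq_getElem]

open Classical in
/-- One standard split step. -/
def Split (D : Digraph') (A B : ↥(CoreV D) → ℕ) : Prop :=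
  ∃ v, 0 < A v ∧ ∀ w, B w = (A w - (if w = v then 1 else 0)) + adjRow D v w

lemma split_add {A B : ↥(CoreV D) → ℕ} (C : ↥(CoreV D) → ℕ) (h : Split D A B) :
    Split D (A + C) (B + C) := by
  classical
  obtain ⟨v, hv, hB⟩ := h
  refine ⟨v, by simp only [Pi.add_apply]; omega, fun w => ?_⟩
  have h1 := hB w
  simp only [Pi.add_apply]
  by_cases hw : w = v
  · subst hw
    rw [if_pos rfl] at h1 ⊢
    omega
  · rw [if_neg hw] at h1 ⊢
    omega

lemma split_diamond {A B C : ↥(CoreV D) → ℕ} (h1 : Split D A B) (h2 : Split D A C) :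
    B = C ∨ ∃ E, Split D B E ∧ Split D C E := by
  classical
  obtain ⟨u, hu, hB⟩ := h1
  obtain ⟨v, hv, hC⟩ := h2
  by_cases huv : u = v
  · subst huv
    left
    funext w
    rw [hB w, hC w]
  · right
    refine ⟨fun w => (A w - (if w = u then 1 else 0) - (if w = v then 1 else 0))
        + adjRow D u w + adjRow D v w, ⟨v, ?_, fun w => ?_⟩, ⟨u, ?_, fun w => ?_⟩⟩
    · have h3 := hB v
      rw [if_neg (fun h => huv h.symm)] at h3
      omega
    · dsimp only
      rw [hB w]
      by_cases h2 : w = v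
      · subst h2
        rw [if_pos rfl, if_neg (fun h : w = u => huv (h.symm))]
        omega
      · rw [if_neg h2]
        by_cases h1 : w = u
        · subst h1
          rw [if_pos rfl]
          omega
        · rw [if_neg h1]
          omega
    · have h3 := hC u
      rw [if_neg huv] at h3
      omega
    · dsimp only
      rw [hC w]
      by_cases h2 : w = u
      · subst h2
        rw [if_pos rfl, if_neg (fun h : w = v => huv (h ▸ rfl))]
        omega
      · rw [if_neg h2]
        by_cases h1 : w = v
        · subst h1
          rw [if_pos rfl]
          omega
        · rw [if_neg h1]
          omega



open Classical in
lemma adjRow_eq [Fintype D.E] (v w : ↥(CoreV D)) :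
    adjRow D v w = (Finset.univ.filter fun e => D.s e = v.1 ∧ D.t e = w.1).card := by
  classical
  simp only [adjRow, Set.ncard_eq_toFinset_card', Set.toFinset_setOf]

/-- The empty walk at a vertex. -/
def nilW (D : Digraph') (v : D.V) : FinWalk D :=
  ⟨v, [], List.isChain_nil, by simp⟩

lemma endVert_nilW (v : D.V) : endVert D (nilW D v) = v := rfl

/-- Extend a finite walk by one edge at the end. -/
def extW (p : FinWalk D) (f : D.E) (hf : D.s f = endVert D p) : FinWalk D where
  start := p.start
  ed := p.ed ++ [f]
  chain := by
    unfold List.Chain'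
    rw [List.isChain_append]
    refine ⟨p.chain, List.isChain_singleton f, fun x hx y hy => ?_⟩
    simp only [List.head?_cons, Option.mem_def, Option.some.injEq] at hy
    subst hy
    rw [hf]
    unfold endVert
    rw [Option.mem_def] at hx
    rw [hx]
    rfl
  hstart := by
    intro e he
    by_cases hnil : p.ed = []
    · rw [hnil] at he
      simp only [List.nil_append, List.head?_cons, Option.mem_def, Option.some.injEq] at he
      subst he
      rw [hf]
      unfold endVert
      rw [hnil]
      rfl
    · rw [List.head?_append_of_ne_nil _ hnil] at he
      exact p.hstart e he

lemma extW_len {p : FinWalk D} {f : D.E} {hf : D.s f = endVert D p} :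
    (extW p f hf).ed.length = p.ed.length + 1 := by
  simp [extW]

lemma endVert_extW {p : FinWalk D} {f : D.E} {hf : D.s f = endVert D p} :
    endVert D (extW p f hf) = D.t f := by
  unfold endVert
  show ((p.ed ++ [f]).getLast?).elim p.start D.t = D.t f
  rw [List.getLast?_concat]
  rfl

lemma extW_ed {p : FinWalk D} {f : D.E} {hf : D.s f = endVert D p} :
    (extW p f hf).ed = p.ed ++ [f] := rfl

lemma begins_extW_iff {q : FwdWalk D} {p : FinWalk D} {f : D.E} {hf : D.s f = endVert D p} :
    Begins D q (extW p f hf) ↔ Begins D q p ∧ q.ed p.ed.length = f := by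
  constructor
  · intro h
    refine ⟨⟨h.1, fun i hi => ?_⟩, ?_⟩
    · have h2 := h.2 i (by rw [extW_len]; omega)
      rw [h2]
      simp only [List.get_eq_getElem, extW_ed]
      exact List.getElem_append_left hi
    · have h2 := h.2 p.ed.length (by rw [extW_len]; omega)
      rw [h2]
      simp only [List.get_eq_getElem, extW_ed]
      rw [List.getElem_append_right (le_refl _)]
      simp
  · rintro ⟨h1, h2⟩
    refine ⟨h1.1, fun i hi => ?_⟩
    rw [extW_len] at hi
    simp only [List.get_eq_getElem, extW_ed]
    rcases lt_or_ge i p.ed.length with h | h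
    · rw [List.getElem_append_left h]
      simpa using h1.2 i h
    · have hi' : i = p.ed.length := by omega
      subst hi'
      rw [List.getElem_append_right (le_refl _)]
      simpa using h2

open Classical in
lemma card_image_end [Fintype D.E] {u : D.V}
    (g : {f : D.E // D.s f = u} → FinWalk D) (hg : Function.Injective g)
    (hend : ∀ f, endVert D (g f) = D.t f.1) (w : D.V) :
    ((Finset.univ.image g).filter fun r => endVert D r = w).card
      = (Finset.univ.filter fun e : D.E => D.s e = u ∧ D.t e = w).card := by
  classical
  rw [Finset.filter_image, Finset.card_image_of_injective _ hg]
  refine Finset.card_bij (fun f _ => f.1) ?_ ?_ ?_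
  · intro a ha
    rw [Finset.mem_filter] at ha ⊢
    exact ⟨Finset.mem_univ _, a.2, by rw [← hend a]; exact ha.2⟩
  · intro a _ b _ h
    exact Subtype.ext h
  · intro b hb
    rw [Finset.mem_filter] at hb
    refine ⟨⟨b, hb.2.1⟩, ?_, rfl⟩
    rw [Finset.mem_filter]
    exact ⟨Finset.mem_univ _, by rw [hend]; exact hb.2.2⟩

lemma extW_inj {p : FinWalk D} : ∀ {f g : D.E} {hf : D.s f = endVert D p}
    {hg : D.s g = endVert D p}, extW p f hf = extW p g hg → f = g := by
  intro f g hf hg h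
  have : (extW p f hf).ed = (extW p g hg).ed := by rw [h]
  rw [extW_ed, extW_ed] at this
  have := List.append_cancel_left this
  simpa using this

open Classical in
lemma split_elem [Fintype D.E] (hV : CoreV D = Set.univ) (hE : CoreE D = Set.univ)
    {A B : ↥(CoreV D) → ℕ} (h : Split D A B) : ElemRefine D A B := by
  classical
  obtain ⟨v, hv, hB⟩ := h
  have hnil : ∀ f : {f : D.E // D.s f = v.1}, D.s f.1 = endVert D (nilW D v.1) :=
    fun f => f.2.trans (endVert_nilW v.1).symm
  refine ⟨v, Finset.univ.image (fun f : {f : D.E // D.s f = v.1} =>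
    extW (nilW D v.1) f.1 (hnil f)), hv, ?_, ?_, ?_⟩
  · intro p hp
    obtain ⟨f, _, rfl⟩ := Finset.mem_image.mp hp
    exact ⟨rfl, fun e _ => by rw [hE]; trivial⟩
  · intro q hq _
    refine ⟨extW (nilW D v.1) (q.ed 0) (hq.trans (endVert_nilW v.1).symm), ⟨?_, ?_⟩, ?_⟩
    · exact Finset.mem_image.mpr ⟨⟨q.ed 0, hq⟩, Finset.mem_univ _, rfl⟩
    · rw [begins_extW_iff]
      exact ⟨⟨hq, fun i hi => by simp [nilW] at hi⟩, rfl⟩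
    · rintro r ⟨hrP, hrB⟩
      obtain ⟨f, _, rfl⟩ := Finset.mem_image.mp hrP
      rw [begins_extW_iff] at hrB
      have : q.ed 0 = f.1 := hrB.2
      apply FinWalk.ext'
      · rfl
      · rw [extW_ed, extW_ed, this]
  · intro w
    rw [hB w]
    congr 1
    rw [adjRow_eq]
    exact (card_image_end _ (fun a b hab => Subtype.ext (extW_inj hab)) (fun f => endVert_extW) w.1).symm

open Classical in
lemma elem_to_splits_aux [Fintype D.E] (hV : CoreV D = Set.univ) :
    ∀ (n : ℕ) (A B : ↥(CoreV D) → ℕ) (v : ↥(CoreV D)) (P : Finset (FinWalk D)),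
      (∑ p ∈ P, p.ed.length) = n →
      0 < A v →
      (∀ p ∈ P, p.start = v.1) →
      (∀ q : FwdWalk D, D.s (q.ed 0) = v.1 → ∃! p, p ∈ P ∧ Begins D q p) →
      (∀ w, B w = (A w - (if w = v then 1 else 0)) +
        (P.filter (fun p => endVert D p = w.1)).card) →
      Relation.ReflTransGen (Split D) A B := by
  classical
  intro n
  induction n using Nat.strong_induction_on with
  | _ n IH =>
  intro A B v P hsum hA hst hex hcount
  obtain ⟨q₀, hq₀⟩ := exists_fwd hV v.1
  obtain ⟨p₀, ⟨hp₀P, hp₀B⟩, hp₀u⟩ := hex q₀ hq₀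
  obtain ⟨p, hpP, hpmax⟩ := P.exists_max_image (fun r => r.ed.length) ⟨p₀, hp₀P⟩
  by_cases hL : p.ed.length = 0
  · -- all walks empty: B = A
    have hall : ∀ r ∈ P, r = p₀ := by
      intro r hr
      refine hp₀u r ⟨hr, ?_, ?_⟩
      · rw [hq₀, hst r hr]
      · intro i hi
        have : r.ed.length = 0 := by have := hpmax r hr; omega
        omega
    have hp₀nil : p₀.ed = [] := by
      have := hpmax p₀ hp₀P
      rw [hL] at this
      exact List.length_eq_zero_iff.mp (by omega)
    have hBA : B = A := by
      funext w
      rw [hcount w]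
      have hP : P = {p₀} := Finset.eq_singleton_iff_unique_mem.mpr ⟨hp₀P, hall⟩
      rw [hP]
      have hend : endVert D p₀ = v.1 := by
        unfold endVert
        rw [hp₀nil]
        exact hst p₀ hp₀P
      by_cases hw : w = v
      · subst hw
        rw [Finset.filter_singleton, if_pos hend, if_pos rfl]
        simp only [Finset.card_singleton]
        omega
      · rw [Finset.filter_singleton, if_neg hw,
          if_neg (fun hc => hw (Subtype.ext ((hend.symm.trans hc)).symm))]
        simp
    rw [hBA]
  · -- main case
    have hpnil : p.ed ≠ [] := fun hc => hL (by rw [hc]; rfl)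
    set L := p.ed.length with hLdef
    -- the dropLast walk p'
    have hp'chain := p.chain.prefix (List.dropLast_prefix p.ed)
    have hp'start : ∀ e ∈ p.ed.dropLast.head?, D.s e = p.start := by
      intro e he
      apply p.hstart
      have hdnil : p.ed.dropLast ≠ [] := by
        intro hc
        rw [hc] at he
        simp at he
      obtain ⟨tl, htl⟩ := List.dropLast_prefix p.ed
      rw [← htl, List.head?_append_of_ne_nil _ hdnil]
      exact he
    set p' : FinWalk D := ⟨p.start, p.ed.dropLast, hp'chain, hp'start⟩ with hp'def
    have hp'len : p'.ed.length = L - 1 := by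
      show p.ed.dropLast.length = L - 1
      rw [List.length_dropLast]
    -- beginning p implies beginning p'
    have hbegins' : ∀ q : FwdWalk D, Begins D q p → Begins D q p' := by
      intro q hq
      refine ⟨hq.1, fun i hi => ?_⟩
      rw [hp'len] at hi
      have := hq.2 i (by omega)
      rw [this]
      simp only [List.get_eq_getElem]
      exact (List.getElem_dropLast (xs := p.ed) (i := i) (by rw [List.length_dropLast]; omega)).symm
    set u := endVert D p' with hudef
    -- the sibling property
    have hSib : ∀ (f : D.E) (hf : D.s f = u), extW p' f hf ∈ P := by
      intro f hf
      obtain ⟨q, hq⟩ := exists_begins hV (extW p' f hf)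
      have hqv : D.s (q.ed 0) = v.1 := by
        rw [hq.1]
        exact hst p hpP
      obtain ⟨r, ⟨hrP, hrB⟩, hru⟩ := hex q hqv
      have hrlen : r.ed.length ≤ L := hpmax r hrP
      have hqext := begins_extW_iff.mp hq
      by_cases hlt : r.ed.length < L
      · exfalso
        obtain ⟨qp, hqp⟩ := exists_begins hV p
        have hrqp : Begins D qp r := by
          constructor
          · rw [hqp.1, hst p hpP, hst r hrP]
          · intro i hi
            have h1 := hrB.2 i hi
            have h2 := hqext.1.2 i (by rw [hp'len]; omega)
            have h3 := hqp.2 i (by omega)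
            rw [h3]
            rw [h1] at h2
            rw [h2]
            simp only [List.get_eq_getElem]
            exact (List.getElem_dropLast (xs := p.ed) (i := i) (by rw [List.length_dropLast]; omega)).symm
        obtain ⟨c, _, hcu⟩ := hex qp (by rw [hqp.1]; exact hst p hpP)
        have h4 : p = c := hcu p ⟨hpP, hqp⟩
        have h5 : r = c := hcu r ⟨hrP, hrqp⟩
        rw [← h4] at h5
        rw [h5] at hlt
        omega
      · have hrlenL : r.ed.length = L := by omega
        have : r = extW p' f hf := by
          apply FinWalk.ext'
          · rw [hst r hrP]
            exact (hst p hpP).symm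
          · refine List.ext_get ?_ fun i h1 h2 => ?_
            · rw [hrlenL, extW_ed, List.length_append, hp'len]
              simp
              omega
            · rw [← hrB.2 i h1, hq.2 i h2]
        rw [← this]
        exact hrP
    -- p itself is a sibling
    have hlastu : D.s (p.ed.getLast hpnil) = u := by
      obtain ⟨qp, hqp⟩ := exists_begins hV p
      have h1 := begins_endVert (hbegins' qp hqp)
      rw [hp'len] at h1
      rw [← hudef] at h1
      rw [← h1]
      congr 1
      rw [hqp.2 (L - 1) (by omega)]
      simp only [List.get_eq_getElem, List.getLast_eq_getElem]
      rfl
    have hpext : p = extW p' (p.ed.getLast hpnil) hlastu := by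
      apply FinWalk.ext'
      · rfl
      · rw [extW_ed]
        exact (List.dropLast_concat_getLast hpnil).symm
    -- the finset of siblings
    set S : Finset (FinWalk D) :=
      Finset.univ.image (fun f : {f : D.E // D.s f = u} => extW p' f.1 f.2) with hSdef
    have hSP : S ⊆ P := by
      intro r hr
      obtain ⟨f, _, rfl⟩ := Finset.mem_image.mp hr
      exact hSib f.1 f.2
    have hSlen : ∀ r ∈ S, r.ed.length = L := by
      intro r hr
      obtain ⟨f, _, rfl⟩ := Finset.mem_image.mp hr
      rw [extW_len, hp'len]
      omega
    have hpS : p ∈ S := by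
      rw [hpext]
      exact Finset.mem_image.mpr ⟨⟨p.ed.getLast hpnil, hlastu⟩, Finset.mem_univ _, rfl⟩
    have hp'P : p' ∉ P := by
      intro hc
      obtain ⟨qp, hqp⟩ := exists_begins hV p
      have h1 := hp'len
      have := hex qp (by rw [hqp.1]; exact hst p hpP)
      obtain ⟨c, _, hcu⟩ := this
      have h4 : p = c := hcu p ⟨hpP, hqp⟩
      have h5 : p' = c := hcu p' ⟨hc, hbegins' qp hqp⟩
      rw [← h4] at h5
      have h6 := hp'len
      rw [h5] at h6
      omega
    have hp'S : p' ∉ P \ S := fun hc => hp'P (Finset.mem_sdiff.mp hc).1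
    set P' : Finset (FinWalk D) := insert p' (P \ S) with hP'def
    have hp'P' : p' ∈ P' := Finset.mem_insert_self _ _
    -- length sum decreases
    have hsum' : (∑ r ∈ P', r.ed.length) < n := by
      rw [hP'def, Finset.sum_insert hp'S]
      have hsplit : ∑ r ∈ P \ S, r.ed.length + ∑ r ∈ S, r.ed.length = ∑ r ∈ P, r.ed.length :=
        Finset.sum_sdiff hSP
      have hS1 : p.ed.length ≤ ∑ r ∈ S, r.ed.length :=
        Finset.single_le_sum (f := fun r : FinWalk D => r.ed.length) (fun i _ => Nat.zero_le _) hpS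
      rw [hsum] at hsplit
      rw [hp'len]
      omega
    -- starts for P'
    have hst' : ∀ r ∈ P', r.start = v.1 := by
      intro r hr
      rcases Finset.mem_insert.mp hr with h | h
      · rw [h]
        exact hst p hpP
      · exact hst r (Finset.mem_sdiff.mp h).1
    -- exhaustiveness for P'
    have hex' : ∀ q : FwdWalk D, D.s (q.ed 0) = v.1 → ∃! r, r ∈ P' ∧ Begins D q r := by
      intro q hq
      obtain ⟨r, ⟨hrP, hrB⟩, hru⟩ := hex q hq
      by_cases hrS : r ∈ S
      · have hBp' : Begins D q p' := by
          obtain ⟨f, _, rfl⟩ := Finset.mem_image.mp hrS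
          exact (begins_extW_iff.mp hrB).1
        refine ⟨p', ⟨hp'P', hBp'⟩, ?_⟩
        rintro r' ⟨hr'P', hr'B⟩
        rcases Finset.mem_insert.mp hr'P' with h | h
        · exact h
        · exfalso
          have := hru r' ⟨(Finset.mem_sdiff.mp h).1, hr'B⟩
          rw [this] at h
          exact (Finset.mem_sdiff.mp h).2 hrS
      · refine ⟨r, ⟨Finset.mem_insert.mpr (Or.inr (Finset.mem_sdiff.mpr ⟨hrP, hrS⟩)), hrB⟩, ?_⟩
        rintro r' ⟨hr'P', hr'B⟩
        rcases Finset.mem_insert.mp hr'P' with h | h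
        · exfalso
          subst h
          have hfq : D.s (q.ed p'.ed.length) = u := begins_endVert hr'B
          have hmem : extW p' (q.ed p'.ed.length) hfq ∈ P := hSib _ hfq
          have hBe : Begins D q (extW p' (q.ed p'.ed.length) hfq) :=
            begins_extW_iff.mpr ⟨hr'B, rfl⟩
          have heq : extW p' (q.ed p'.ed.length) hfq = r := hru _ ⟨hmem, hBe⟩
          apply hrS
          rw [← heq]
          exact Finset.mem_image.mpr ⟨⟨q.ed p'.ed.length, hfq⟩, Finset.mem_univ _, rfl⟩
        · exact hru r' ⟨(Finset.mem_sdiff.mp h).1, hr'B⟩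
    -- intermediate multiset
    set B' : ↥(CoreV D) → ℕ := fun w => (A w - (if w = v then 1 else 0)) +
      ((P'.filter (fun r => endVert D r = w.1)).card) with hB'def
    have step1 : Relation.ReflTransGen (Split D) A B' :=
      IH _ hsum' A B' v P' rfl hA hst' hex' (fun w => rfl)
    -- the final split
    have huV : u ∈ CoreV D := by rw [hV]; trivial
    set uu : ↥(CoreV D) := ⟨u, huV⟩ with huudef
    have hcS : ∀ w : ↥(CoreV D), (S.filter (fun r => endVert D r = w.1)).card = adjRow D uu w := by
      intro w
      rw [adjRow_eq, hSdef]
      exact card_image_end _ (fun a b hab => Subtype.ext (extW_inj hab)) (fun f => endVert_extW) w.1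
    have step2 : Split D B' B := by
      refine ⟨uu, ?_, fun w => ?_⟩
      · have : p' ∈ P'.filter (fun r => endVert D r = uu.1) :=
          Finset.mem_filter.mpr ⟨hp'P', rfl⟩
        have hpos := Finset.card_pos.mpr ⟨p', this⟩
        rw [hB'def]
        simp only
        exact Nat.add_pos_right _ hpos
      · rw [hcount w, hB'def]
        simp only
        -- split the count over P
        have hPsplit : (P.filter (fun r => endVert D r = w.1)).card =
            ((P \ S).filter (fun r => endVert D r = w.1)).card +
            (S.filter (fun r => endVert D r = w.1)).card := by
          rw [← Finset.card_union_of_disjoint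
            (Finset.disjoint_filter_filter Finset.sdiff_disjoint)]
          rw [← Finset.filter_union, Finset.sdiff_union_of_subset hSP]
        have hP'split : (P'.filter (fun r => endVert D r = w.1)).card =
            ((P \ S).filter (fun r => endVert D r = w.1)).card +
            (if w = uu then 1 else 0) := by
          rw [hP'def]
          by_cases hw : w = uu
          · rw [if_pos hw, Finset.filter_insert, if_pos (by rw [hw]), Finset.card_insert_of_notMem
              (fun hc => hp'S (Finset.mem_filter.mp hc).1)]
          · rw [if_neg hw, Finset.filter_insert, if_neg (fun hc : endVert D p' = w.1 =>
              hw (Subtype.ext hc.symm))]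
            omega
        rw [hPsplit, hP'split, hcS w]
        omega
    exact step1.tail step2

lemma elem_to_splits [Fintype D.E] (hV : CoreV D = Set.univ) (hE : CoreE D = Set.univ)
    {A B : ↥(CoreV D) → ℕ} (h : ElemRefine D A B) :
    Relation.ReflTransGen (Split D) A B := by
  classical
  obtain ⟨v, P, hv, hst, hex, hcount⟩ := h
  exact elem_to_splits_aux hV _ A B v P rfl hv (fun p hp => (hst p hp).1)
    (fun q hq => hex q hq (fun i => by rw [hE]; trivial)) hcount

lemma refine_splits [Fintype D.E] (hV : CoreV D = Set.univ) (hE : CoreE D = Set.univ)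
    {A B : ↥(CoreV D) → ℕ} (h : Refine D A B) :
    Relation.ReflTransGen (Split D) A B := by
  induction h with
  | refl => exact .refl
  | tail _ h2 ih => exact ih.trans (elem_to_splits hV hE h2)

lemma splits_refine [Fintype D.E] (hV : CoreV D = Set.univ) (hE : CoreE D = Set.univ)
    {A B : ↥(CoreV D) → ℕ} (h : Relation.ReflTransGen (Split D) A B) :
    Refine D A B :=
  Relation.ReflTransGen.mono (fun _ _ hab => split_elem hV hE hab) _ _ h

lemma split_cr {A B C : ↥(CoreV D) → ℕ} (h1 : Split D A B) (h2 : Split D A C) :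
    ∃ E, Relation.ReflGen (Split D) B E ∧ Relation.ReflTransGen (Split D) C E := by
  rcases split_diamond h1 h2 with h | ⟨E, hBE, hCE⟩
  · subst h
    exact ⟨B, .refl, .refl⟩
  · exact ⟨E, .single hBE, .single hCE⟩

lemma chain_add {A B : ↥(CoreV D) → ℕ} (C : ↥(CoreV D) → ℕ)
    (h : Relation.ReflTransGen (Split D) A B) :
    Relation.ReflTransGen (Split D) (A + C) (B + C) :=
  Relation.ReflTransGen.lift (fun X => X + C) (fun _ _ hab => split_add C hab) _ _ h

lemma split_chi {v : ↥(CoreV D)} : Split D (chi D v) (adjRow D v) := by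
  classical
  refine ⟨v, ?_, fun w => ?_⟩
  · show 0 < (if v = v then 1 else 0)
    rw [if_pos rfl]
    omega
  · show adjRow D v w = ((if w = v then 1 else 0) - (if w = v then 1 else 0)) + adjRow D v w
    omega

open Classical in
lemma con_join [Fintype D.E] (hV : CoreV D = Set.univ)
    {A B : ↥(CoreV D) → ℕ}
    (h : AddConGen.Rel (fun A B => ∃ v, A = chi D v ∧ B = adjRow D v) A B) :
    ∃ N, Relation.ReflTransGen (Split D) A N ∧ Relation.ReflTransGen (Split D) B N := by
  induction h with
  | of x y hxy =>
    obtain ⟨v, rfl, rfl⟩ := hxy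
    exact ⟨adjRow D v, .single split_chi, .refl⟩
  | refl x => exact ⟨x, .refl, .refl⟩
  | symm _ ih =>
    obtain ⟨N, h1, h2⟩ := ih
    exact ⟨N, h2, h1⟩
  | trans _ _ ih1 ih2 =>
    obtain ⟨N, h1, h2⟩ := ih1
    obtain ⟨N', h3, h4⟩ := ih2
    obtain ⟨K, h5, h6⟩ := Relation.church_rosser (fun a b c => split_cr) h2 h3
    exact ⟨K, h1.trans h5, h4.trans h6⟩
  | add _ _ ih1 ih2 =>
    obtain ⟨N, h1, h2⟩ := ih1
    obtain ⟨N', h3, h4⟩ := ih2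
    refine ⟨N + N', ?_, ?_⟩
    · refine (chain_add _ h1).trans ?_
      rw [add_comm N _, add_comm N N']
      exact chain_add _ h3
    · refine (chain_add _ h2).trans ?_
      rw [add_comm N _, add_comm N N']
      exact chain_add _ h4

open Classical in
lemma split_con [Fintype D.E] {A B : ↥(CoreV D) → ℕ} (h : Split D A B) :
    addConGen (fun A B => ∃ v, A = chi D v ∧ B = adjRow D v) A B := by
  classical
  obtain ⟨v, hv, hB⟩ := h
  have hA : A = (fun w => A w - chi D v w) + chi D v := by
    funext w
    show A w = A w - (if w = v then 1 else 0) + (if w = v then 1 else 0)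
    by_cases hw : w = v
    · subst hw; rw [if_pos rfl]; omega
    · rw [if_neg hw]
      omega
  have hB' : B = (fun w => A w - chi D v w) + adjRow D v := by
    funext w
    show B w = A w - (if w = v then 1 else 0) + adjRow D v w
    exact hB w
  rw [hA, hB']
  exact AddCon.add _ (AddCon.refl _ _) (AddConGen.Rel.of _ _ ⟨v, rfl, rfl⟩)

lemma splits_con [Fintype D.E] {A B : ↥(CoreV D) → ℕ}
    (h : Relation.ReflTransGen (Split D) A B) :
    addConGen (fun A B => ∃ v, A = chi D v ∧ B = adjRow D v) A B := by
  induction h with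
  | refl => exact AddCon.refl _ _
  | tail _ h2 ih => exact (addConGen _).trans ih (split_con h2)


/-- For a finite digraph equal to its core, the congruence generated by the pairs
`(χ_v, Σ_w Adj_D(v,w)·χ_w)` coincides with the common-refinement congruence `∼_D`. -/
theorem stmt12 (D : Digraph') [Fintype D.V] [Fintype D.E]
    (hV : CoreV D = Set.univ) (hE : CoreE D = Set.univ)
    (M₁ M₂ : ↥(CoreV D) → ℕ) :
    addConGen (fun A B => ∃ v, A = chi D v ∧ B = adjRow D v) M₁ M₂ ↔
      ∃ N, Refine D M₁ N ∧ Refine D M₂ N := by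
  classical
  constructor
  · intro h
    obtain ⟨N, h1, h2⟩ := con_join hV h
    exact ⟨N, splits_refine hV hE h1, splits_refine hV hE h2⟩
  · rintro ⟨N, h1, h2⟩
    have c1 := splits_con (refine_splits hV hE h1)
    have c2 := splits_con (refine_splits hV hE h2)
    exact (addConGen _).trans c1 ((addConGen _).symm c2)
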